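/- Let X be a nonnegative random variable and V a monotone capacity, and let aₙ = √(2n·log log n) where log x = ln(max(x, e)). Then for any fixed δ > 0, the series Σₙ V(X ≥ δ·aₙ) converges if and only if the Choquet integral C_V[X²/(log log X)] = ∫₀^∞ V(X²/(log log X) > t) dt is finite. -/
import Mathlib


open ENNReal MeasureTheory

/-- `llog x = ln (max x e)`. -/
noncomputable def llog (x : ℝ) : ℝ := Real.log (max x (Real.exp 1))

/-- `a n = sqrt (2 n log log n)`. -/
noncomputable def lilSeq (n : ℕ) : ℝ := Real.sqrt (2 * n * llog (llog n))


lemma one_le_llog (x : ℝ) : 1 ≤ llog x := by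
  have h : Real.exp 1 ≤ max x (Real.exp 1) := le_max_right _ _
  have := Real.log_le_log (Real.exp_pos 1) h
  rwa [Real.log_exp] at this

lemma llog_pos (x : ℝ) : 0 < llog x := lt_of_lt_of_le one_pos (one_le_llog x)

lemma llog_mono : Monotone llog := fun x y hxy => by
  unfold llog
  exact Real.log_le_log (lt_of_lt_of_le (Real.exp_pos 1) (le_max_right _ _))
    (max_le_max hxy le_rfl)

lemma llog_eq_log {x : ℝ} (hx : Real.exp 1 ≤ x) : llog x = Real.log x := by
  rw [llog, max_eq_left hx]

lemma llog_le_self {x : ℝ} (hx : Real.exp 1 ≤ x) : llog x ≤ x := by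
  rw [llog_eq_log hx]
  have hx0 : 0 < x := lt_of_lt_of_le (Real.exp_pos 1) hx
  linarith [Real.log_le_sub_one_of_pos hx0]

lemma llog_llog_le_self {x : ℝ} (hx : Real.exp 1 ≤ x) : llog (llog x) ≤ x := by
  set u := max (llog x) (Real.exp 1) with hu
  have hu0 : 0 < u := lt_of_lt_of_le (Real.exp_pos 1) (le_max_right _ _)
  have hux : u ≤ x := max_le (llog_le_self hx) hx
  have : llog (llog x) = Real.log u := rfl
  rw [this]
  linarith [Real.log_le_sub_one_of_pos hu0]

lemma llog_half (t : ℝ) : llog t - Real.log 2 ≤ llog (t / 2) := by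
  have h1 : max t (Real.exp 1) / 2 ≤ max (t / 2) (Real.exp 1) := by
    rcases le_total t (Real.exp 1) with h | h
    · rw [max_eq_right h]
      calc Real.exp 1 / 2 ≤ Real.exp 1 := by linarith [Real.exp_pos 1]
        _ ≤ _ := le_max_right _ _
    · rw [max_eq_left h]
      exact le_max_left _ _
  have h0 : 0 < max t (Real.exp 1) / 2 := by
    have := lt_of_lt_of_le (Real.exp_pos 1) (le_max_right t (Real.exp 1)); linarith
  have := Real.log_le_log h0 h1
  rw [Real.log_div (by positivity) (by norm_num)] at this
  exact this

lemma half_llog_le {t : ℝ} (ht : 4 ≤ t) : llog t / 2 ≤ llog (t / 2) := by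
  have h4 : Real.log 4 ≤ llog t := by
    apply Real.log_le_log (by norm_num)
    exact le_trans ht (le_max_left _ _)
  have hlog4 : Real.log 4 = 2 * Real.log 2 := by
    rw [show (4:ℝ) = 2^2 by norm_num, Real.log_pow]; push_cast; ring
  have := llog_half t
  linarith

lemma exp_one_lt_3 : Real.exp 1 < 3 :=
  lt_trans Real.exp_one_lt_d9 (by norm_num)

lemma exp_four_le_100 : Real.exp 4 ≤ 100 := by
  have h : Real.exp 4 = (Real.exp 1)^(4:ℕ) := by
    rw [Real.exp_one_pow]; norm_num
  rw [h]
  calc (Real.exp 1)^(4:ℕ) ≤ (2.7182818286:ℝ)^(4:ℕ) := by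
        apply pow_le_pow_left₀ (le_of_lt (Real.exp_pos 1)) (le_of_lt Real.exp_one_lt_d9)
    _ ≤ 100 := by norm_num

lemma incl_A {δ : ℝ} (hδ : 0 < δ) {x : ℝ} (hx : 0 ≤ x) {n : ℕ} (hn : 100 ≤ n)
    (h : max 1 (4 * δ ^ 2) * n < x ^ 2 / llog (llog x)) : δ * lilSeq n ≤ x := by
  set a := max 1 (4 * δ ^ 2) with ha
  set M := llog (llog x) with hM
  set L := llog (llog (n : ℝ)) with hL
  have hM1 : 1 ≤ M := one_le_llog _
  have hL1 : 1 ≤ L := one_le_llog _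
  have ha1 : 1 ≤ a := le_max_left _ _
  have hn1 : (100 : ℝ) ≤ n := by exact_mod_cast hn
  have hM0 : 0 < M := by linarith
  have hx2 : a * n * M < x ^ 2 := by
    rw [lt_div_iff₀ hM0] at h; exact h
  have hn_le : (n : ℝ) ≤ a * n * M := by
    have h1 : (n : ℝ) ≤ a * n := le_mul_of_one_le_left (Nat.cast_nonneg n) ha1
    have h2 : a * n ≤ a * n * M := le_mul_of_one_le_right (by nlinarith) hM1
    linarith
  have hx2n : (n : ℝ) < x ^ 2 := lt_of_le_of_lt hn_le hx2
  have hx0 : 0 < x := by nlinarith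
  have hsn : Real.sqrt n < x := by
    rw [Real.sqrt_lt' hx0]; exact hx2n
  -- √n ≥ 10 > e
  have h10 : (10 : ℝ) ≤ Real.sqrt n := by
    rw [Real.le_sqrt (by norm_num) (Nat.cast_nonneg n)]; norm_num; linarith
  have hesn : Real.exp 1 ≤ Real.sqrt n := le_trans (le_of_lt exp_one_lt_3) (by linarith)
  have hen : Real.exp 1 ≤ (n : ℝ) := le_trans (le_of_lt exp_one_lt_3) (by linarith)
  -- llog √n = llog n / 2
  have hlsn : llog (Real.sqrt n) = llog n / 2 := by
    rw [llog_eq_log hesn, llog_eq_log hen, Real.log_sqrt (Nat.cast_nonneg n)]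
  -- llog n ≥ 4
  have hln4 : 4 ≤ llog (n : ℝ) := by
    rw [llog_eq_log hen, Real.le_log_iff_exp_le (by linarith)]
    linarith [exp_four_le_100]
  -- M ≥ L / 2
  have hML : L / 2 ≤ M := by
    have h1 : llog (llog (Real.sqrt n)) ≤ M := by
      apply llog_mono; apply llog_mono; exact le_of_lt hsn
    have h2 : L / 2 ≤ llog (llog (Real.sqrt n)) := by
      rw [hlsn, hL, llog_eq_log hen]
      exact half_llog_le (by rwa [llog_eq_log hen] at hln4)
    linarith
  -- x² > 2 δ² n L
  have key : 2 * δ ^ 2 * n * L ≤ x ^ 2 := by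
    have h4 : 4 * δ ^ 2 ≤ a := le_max_right _ _
    have hn0 : (0:ℝ) ≤ n := Nat.cast_nonneg n
    have h5 : 4 * δ ^ 2 * n * (L / 2) ≤ a * n * M := by
      apply mul_le_mul _ hML (by linarith) (by nlinarith)
      apply mul_le_mul_of_nonneg_right h4 hn0
    nlinarith
  -- conclude
  have hsq : (δ * lilSeq n) ^ 2 ≤ x ^ 2 := by
    rw [mul_pow, lilSeq, Real.sq_sqrt (by nlinarith [Nat.cast_nonneg (α := ℝ) n])]
    calc δ ^ 2 * (2 * n * L) = 2 * δ ^ 2 * n * L := by ring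
      _ ≤ x ^ 2 := key
  have hls0 : (0:ℝ) ≤ lilSeq n := Real.sqrt_nonneg _
  calc δ * lilSeq n = Real.sqrt ((δ * lilSeq n) ^ 2) :=
        (Real.sqrt_sq (mul_nonneg hδ.le hls0)).symm
    _ ≤ Real.sqrt (x ^ 2) := Real.sqrt_le_sqrt hsq
    _ = x := Real.sqrt_sq hx

lemma incl_B {δ : ℝ} (hδ : 0 < δ) {x : ℝ} {n : ℕ} (hn : 3 ≤ n)
    (h : δ * lilSeq n ≤ x) :
    (δ ^ 2 / (δ ^ 2 + 1)) * n < x ^ 2 / llog (llog x) := by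
  set M := llog (llog x) with hM
  set L := llog (llog (n : ℝ)) with hL
  have hM1 : 1 ≤ M := one_le_llog _
  have hL1 : 1 ≤ L := one_le_llog _
  have hM0 : 0 < M := by linarith
  have hL0 : 0 < L := by linarith
  have hn3 : (3 : ℝ) ≤ n := by exact_mod_cast hn
  have hls0 : 0 ≤ lilSeq n := Real.sqrt_nonneg _
  have hx0 : 0 ≤ x := le_trans (by positivity) h
  have hx2 : 2 * δ ^ 2 * n * L ≤ x ^ 2 := by
    have hh := mul_self_le_mul_self (mul_nonneg hδ.le hls0) h
    have hss : lilSeq n * lilSeq n = 2 * n * L :=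
      Real.mul_self_sqrt (by nlinarith [Nat.cast_nonneg (α := ℝ) n])
    nlinarith [hh, hss]
  have hb : δ ^ 2 / (δ ^ 2 + 1) < 2 * δ ^ 2 := by
    rw [div_lt_iff₀ (by positivity)]; nlinarith
  have hb1 : δ ^ 2 / (δ ^ 2 + 1) ≤ 1 := by
    rw [div_le_one (by positivity)]; linarith
  rcases le_total x n with hxn | hxn
  · -- x ≤ n : M ≤ L
    have hMleL : M ≤ L := llog_mono (llog_mono hxn)
    have h1 : x ^ 2 / L ≤ x ^ 2 / M := div_le_div_of_nonneg_left (by positivity) hM0 hMleL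
    have h2 : 2 * δ ^ 2 * n ≤ x ^ 2 / L := by
      rw [le_div_iff₀ hL0]; nlinarith
    calc (δ ^ 2 / (δ ^ 2 + 1)) * n < 2 * δ ^ 2 * n := by
          apply mul_lt_mul_of_pos_right hb; linarith
      _ ≤ x ^ 2 / L := h2
      _ ≤ x ^ 2 / M := h1
  · -- n ≤ x
    have hex : Real.exp 1 ≤ x := le_trans (le_of_lt exp_one_lt_3) (by linarith)
    have hMx : M ≤ x := llog_llog_le_self hex
    have hx0' : 0 < x := by linarith [Real.exp_pos 1]
    have h1 : x ≤ x ^ 2 / M := by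
      rw [le_div_iff₀ hM0]; nlinarith
    have hb1' : δ ^ 2 / (δ ^ 2 + 1) < 1 := by
      rw [div_lt_one (by positivity)]; linarith
    calc (δ ^ 2 / (δ ^ 2 + 1)) * n < 1 * n := by
          apply mul_lt_mul_of_pos_right hb1'; linarith
      _ = n := one_mul _
      _ ≤ x := hxn
      _ ≤ x ^ 2 / M := h1

lemma tail_tsum_ne_top {f h : ℕ → ℝ≥0∞} (N : ℕ) (hf1 : ∀ n, f n ≤ 1)
    (hfh : ∀ n, N ≤ n → f n ≤ h n) (hh : ∑' n, h n ≠ ⊤) : ∑' n, f n ≠ ⊤ := by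
  have hb : ∀ n, f n ≤ h n + (if n < N then 1 else 0) := by
    intro n
    by_cases hn : n < N
    · simp only [hn, if_true]
      exact le_add_left (hf1 n)
    · simp only [hn, if_false, add_zero]
      exact hfh n (le_of_not_gt hn)
  have hle : ∑' n, f n ≤ ∑' n, h n + ∑' n, (if n < N then (1:ℝ≥0∞) else 0) := by
    rw [← ENNReal.tsum_add]; exact ENNReal.tsum_le_tsum hb
  have hN : ∑' n, (if n < N then (1:ℝ≥0∞) else 0) = N := by
    rw [tsum_eq_sum (s := Finset.range N)
      (by intro b hb; simp only [Finset.mem_range] at hb; simp [hb])]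
    calc ∑ b ∈ Finset.range N, (if b < N then (1:ℝ≥0∞) else 0)
        = ∑ _b ∈ Finset.range N, (1:ℝ≥0∞) :=
          Finset.sum_congr rfl (fun b hb => if_pos (Finset.mem_range.mp hb))
      _ = N := by simp
  rw [hN] at hle
  exact ne_top_of_le_ne_top (ENNReal.add_ne_top.mpr ⟨hh, ENNReal.natCast_ne_top N⟩) hle

lemma tsum_scale {g : ℝ → ℝ≥0∞} (hg : Antitone g) {a : ℝ} (ha : 0 < a)
    (h : ∑' n : ℕ, g n ≠ ⊤) : ∑' n : ℕ, g (a * n) ≠ ⊤ := by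
  set m := ⌈1/a⌉₊ with hm
  have hm0 : 0 < m := Nat.ceil_pos.mpr (by positivity)
  haveI : NeZero m := ⟨hm0.ne'⟩
  have key : ∀ n : ℕ, g (a * n) ≤ g ((n / m : ℕ) : ℝ) := by
    intro n
    apply hg
    calc ((n / m : ℕ) : ℝ) ≤ (n : ℝ) / m := Nat.cast_div_le
      _ ≤ a * n := by
        rw [div_le_iff₀ (by exact_mod_cast hm0)]
        have h1 : (1:ℝ) ≤ a * m := by
          have h2 := Nat.le_ceil (1/a)
          calc (1:ℝ) = a * (1/a) := by field_simp
            _ ≤ a * m := mul_le_mul_of_nonneg_left h2 ha.le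
        nlinarith [Nat.cast_nonneg (α := ℝ) n]
  have heq : ∑' n : ℕ, g ((n / m : ℕ) : ℝ) = (m : ℝ≥0∞) * ∑' k : ℕ, g k := by
    have e := (Nat.divModEquiv m).tsum_eq (fun p : ℕ × Fin m => g (p.1 : ℝ))
    have e2 : ∑' n : ℕ, g ((n / m : ℕ) : ℝ)
        = ∑' p : ℕ × Fin m, g ((p.1 : ℕ) : ℝ) := by
      rw [← e]; exact tsum_congr (fun n => rfl)
    have e3 : ∀ k : ℕ, ∑' _ : Fin m, g (k : ℝ) = (m : ℝ≥0∞) * g k := by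
      intro k
      rw [tsum_fintype]
      simp [Finset.sum_const, nsmul_eq_mul]
    calc ∑' n : ℕ, g ((n / m : ℕ) : ℝ)
        = ∑' p : ℕ × Fin m, g ((p.1 : ℕ) : ℝ) := e2
      _ = ∑' (k : ℕ) (_ : Fin m), g (k : ℝ) :=
          ENNReal.tsum_prod (f := fun (k : ℕ) (_ : Fin m) => g (k : ℝ))
      _ = ∑' k : ℕ, (m : ℝ≥0∞) * g k := tsum_congr e3
      _ = (m : ℝ≥0∞) * ∑' k : ℕ, g k := ENNReal.tsum_mul_left
  have h2 : ∑' n : ℕ, g ((n / m : ℕ) : ℝ) ≠ ⊤ := by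
    rw [heq]
    exact (ENNReal.mul_lt_top (ENNReal.natCast_lt_top m) (lt_top_iff_ne_top.mpr h)).ne
  exact ne_top_of_le_ne_top h2 (ENNReal.tsum_le_tsum key)

lemma integral_iff_tsum {g : ℝ → ℝ≥0∞} (hg : Antitone g) (hg1 : ∀ t, g t ≤ 1) :
    (∫⁻ t in Set.Ioi (0:ℝ), g t ≠ ⊤) ↔ (∑' n : ℕ, g n ≠ ⊤) := by
  have hmeas : Measurable g := hg.measurable
  have hU : Set.Ioi (0:ℝ) = ⋃ n : ℕ, Set.Ioc (n : ℝ) (n+1) := by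
    ext x
    simp only [Set.mem_Ioi, Set.mem_iUnion, Set.mem_Ioc]
    constructor
    · intro hx
      have h1 : 1 ≤ ⌈x⌉₊ := Nat.one_le_ceil_iff.mpr hx
      refine ⟨⌈x⌉₊ - 1, ?_, ?_⟩
      · by_contra hcon
        push_neg at hcon
        have := Nat.ceil_le.mpr hcon
        omega
      · have h2 := Nat.le_ceil x
        have h3 : ((⌈x⌉₊ - 1 : ℕ) : ℝ) = (⌈x⌉₊ : ℝ) - 1 := by
          push_cast [Nat.cast_sub h1]; ring
        rw [h3]; linarith
    · rintro ⟨n, h1, _⟩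
      exact lt_of_le_of_lt (Nat.cast_nonneg n) h1
  have hdisj : Pairwise (Function.onFun Disjoint fun n : ℕ => Set.Ioc (n:ℝ) (n+1)) := by
    intro i j hij
    apply Set.disjoint_left.mpr
    rintro x ⟨hi1, hi2⟩ ⟨hj1, hj2⟩
    rcases lt_or_gt_of_ne hij with hlt | hlt
    · have : (i:ℝ) + 1 ≤ j := by exact_mod_cast Nat.succ_le_of_lt hlt
      linarith
    · have : (j:ℝ) + 1 ≤ i := by exact_mod_cast Nat.succ_le_of_lt hlt
      linarith
  have hdecomp : ∫⁻ t in Set.Ioi (0:ℝ), g t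
      = ∑' n : ℕ, ∫⁻ t in Set.Ioc (n:ℝ) (n+1), g t := by
    rw [hU, lintegral_iUnion (fun n => measurableSet_Ioc) hdisj]
  have hvol : ∀ n : ℕ, volume (Set.Ioc (n:ℝ) (n+1)) = 1 := by
    intro n; rw [Real.volume_Ioc]; norm_num
  have upper : ∀ n : ℕ, ∫⁻ t in Set.Ioc (n:ℝ) (n+1), g t ≤ g n := by
    intro n
    calc ∫⁻ t in Set.Ioc (n:ℝ) (n+1), g t
        ≤ ∫⁻ _ in Set.Ioc (n:ℝ) (n+1), g n :=
          setLIntegral_mono measurable_const (fun x hx => hg (le_of_lt hx.1))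
      _ = g n * volume (Set.Ioc (n:ℝ) (n+1)) := setLIntegral_const _ _
      _ = g n := by rw [hvol, mul_one]
  have lower : ∀ n : ℕ, g (((n+1 : ℕ) : ℝ)) ≤ ∫⁻ t in Set.Ioc (n:ℝ) (n+1), g t := by
    intro n
    calc g (((n+1:ℕ)):ℝ) = g (((n+1:ℕ)):ℝ) * volume (Set.Ioc (n:ℝ) (n+1)) := by
          rw [hvol, mul_one]
      _ = ∫⁻ _ in Set.Ioc (n:ℝ) (n+1), g (((n+1:ℕ)):ℝ) := (setLIntegral_const _ _).symm
      _ ≤ ∫⁻ t in Set.Ioc (n:ℝ) (n+1), g t :=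
          setLIntegral_mono hmeas (fun x hx => hg (by push_cast; exact hx.2))
  constructor
  · intro hint
    have h1 : ∑' n : ℕ, g (((n+1:ℕ)):ℝ) ≠ ⊤ := by
      apply ne_top_of_le_ne_top (hdecomp ▸ hint)
      exact ENNReal.tsum_le_tsum lower
    have h2 : ∑' n : ℕ, g (n : ℝ) = g ((0:ℕ):ℝ) + ∑' n : ℕ, g (((n+1:ℕ)):ℝ) := by
      exact tsum_eq_zero_add' (f := fun n : ℕ => g (n:ℝ)) ENNReal.summable
    rw [h2]
    exact ENNReal.add_ne_top.mpr ⟨ne_top_of_le_ne_top ENNReal.one_ne_top (hg1 _), h1⟩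
  · intro hsum
    rw [hdecomp]
    exact ne_top_of_le_ne_top hsum (ENNReal.tsum_le_tsum upper)

theorem series_iff_choquet {Ω : Type*} (V : Set Ω → ℝ≥0∞)
    (hempty : V ∅ = 0) (huniv : V Set.univ = 1) (hle : ∀ A : Set Ω, V A ≤ 1)
    (hmono : ∀ A B : Set Ω, A ⊆ B → V A ≤ V B)
    (X : Ω → ℝ) (hX : ∀ ω, 0 ≤ X ω) (δ : ℝ) (hδ : 0 < δ) :
    (∑' n : ℕ, V {ω | δ * lilSeq n ≤ X ω} ≠ ⊤) ↔
      (∫⁻ t in Set.Ioi (0 : ℝ), V {ω | t < X ω ^ 2 / llog (llog (X ω))} ≠ ⊤) := by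
  set g : ℝ → ℝ≥0∞ := fun t => V {ω | t < X ω ^ 2 / llog (llog (X ω))} with hgdef
  have hg_anti : Antitone g := by
    intro s t hst
    exact hmono _ _ (fun ω hω => lt_of_le_of_lt hst hω)
  have hg1 : ∀ t, g t ≤ 1 := fun t => hle _
  have key := integral_iff_tsum hg_anti hg1
  set a : ℝ := max 1 (4 * δ ^ 2) with ha
  have ha0 : 0 < a := lt_of_lt_of_le one_pos (le_max_left _ _)
  set b : ℝ := δ ^ 2 / (δ ^ 2 + 1) with hb
  have hb0 : 0 < b := by positivity
  constructor
  · intro hS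
    apply key.mpr
    have hA : ∑' n : ℕ, g (a * n) ≠ ⊤ := by
      refine tail_tsum_ne_top 100 (fun n => hg1 _) ?_ hS
      intro n hn
      apply hmono
      intro ω hω
      exact incl_A hδ (hX ω) hn hω
    have hg'_anti : Antitone (fun t => g (a * t)) := by
      intro s t hst
      exact hg_anti (by nlinarith)
    have h2 := tsum_scale hg'_anti (a := 1 / a) (by positivity) hA
    have heq : ∀ n : ℕ, g (a * (1 / a * n)) = g (n : ℝ) := by
      intro n; congr 1; field_simp
    exact (tsum_congr heq) ▸ h2
  · intro hI
    have hsum : ∑' n : ℕ, g n ≠ ⊤ := key.mp hI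
    have hB : ∑' n : ℕ, g (b * n) ≠ ⊤ := tsum_scale hg_anti hb0 hsum
    refine tail_tsum_ne_top 3 (fun n => hle _) ?_ hB
    intro n hn
    apply hmono
    intro ω hω
    exact incl_B hδ hn hω
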